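/- Let I* ⊆ [K] satisfy the rank-increment condition rank([F_{I*}; G_{I*}]) = rank(F_{I*}) + N, and suppose I* is inclusion-wise minimal with this property (i.e., no proper subset of I* satisfies the condition). Then |I*| = N + rank(F_{I*}); equivalently, the matrix [F_{I*}; G_{I*}] has full column rank. -/

import Mathlib

open Finset Matrix

/-- The submatrix of `A` formed by the columns indexed by the subset `I`. -/
def colSub {𝔽 : Type*} {M K : ℕ} (A : Matrix (Fin M) (Fin K) 𝔽) (I : Finset (Fin K)) :
    Matrix (Fin M) {x // x ∈ I} 𝔽 :=
  A.submatrix id Subtype.val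

/-- If a family indexed by a finset has a nontrivial dependency with nonzero coefficient
at `j`, the span of the image is unchanged after erasing `j`. -/
lemma span_image_erase {𝔽 : Type*} [Field 𝔽] {K : ℕ} {V : Type*} [AddCommGroup V]
    [Module 𝔽 V] (v : Fin K → V) (I : Finset (Fin K)) (g : {x // x ∈ I} → 𝔽)
    (hsum : ∑ i : {x // x ∈ I}, g i • v i.val = 0) (j : {x // x ∈ I}) (hgj : g j ≠ 0) :
    Submodule.span 𝔽 (v '' (I.erase j.val)) = Submodule.span 𝔽 (v '' I) := by
  apply le_antisymm
  · exact Submodule.span_mono (Set.image_mono (by exact_mod_cast Finset.erase_subset _ _))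
  · rw [Submodule.span_le]
    rintro x ⟨i, hi, rfl⟩
    by_cases hij : i = j.val
    · subst hij
      have hrest : ∀ k ∈ Finset.univ.erase j, v k.val ∈ Submodule.span 𝔽 (v '' (I.erase j.val)) := by
        intro k hk
        apply Submodule.subset_span
        exact ⟨k.val, Finset.mem_erase.mpr ⟨fun h => (Finset.mem_erase.mp hk).1
          (Subtype.ext h), k.2⟩, rfl⟩
      have hsplit : g j • v j.val + ∑ k ∈ Finset.univ.erase j, g k • v k.val = 0 := by
        rw [Finset.add_sum_erase _ (fun k => g k • v k.val) (Finset.mem_univ j)]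
        exact hsum
      have : v j.val = (g j)⁻¹ • (-(∑ k ∈ Finset.univ.erase j, g k • v k.val)) := by
        rw [eq_inv_smul_iff₀ hgj]
        linear_combination (norm := module) hsplit
      rw [this]
      exact Submodule.smul_mem _ _ (Submodule.neg_mem _ (Submodule.sum_mem _
        fun k hk => Submodule.smul_mem _ _ (hrest k hk)))
    · exact Submodule.subset_span ⟨i, Finset.mem_erase.mpr ⟨hij, by exact_mod_cast hi⟩, rfl⟩

lemma rank_colSub {𝔽 : Type*} [Field 𝔽] {M K : ℕ} (A : Matrix (Fin M) (Fin K) 𝔽)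
    (I : Finset (Fin K)) :
    (colSub A I).rank = Module.finrank 𝔽 (Submodule.span 𝔽 (Aᵀ '' I)) := by
  have hset : Set.range (colSub A I)ᵀ = Aᵀ '' ↑I := by
    rw [show (colSub A I)ᵀ = (fun k => Aᵀ k) ∘ Subtype.val from rfl, Set.range_comp, Subtype.range_coe]
  rw [Matrix.rank_eq_finrank_span_cols, Matrix.col, hset]

lemma rank_fromRows_colSub {𝔽 : Type*} [Field 𝔽] {M N K : ℕ}
    (F : Matrix (Fin M) (Fin K) 𝔽) (G : Matrix (Fin N) (Fin K) 𝔽) (I : Finset (Fin K)) :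
    (Matrix.fromRows (colSub F I) (colSub G I)).rank
      = Module.finrank 𝔽 (Submodule.span 𝔽 ((fun k => Sum.elim (Fᵀ k) (Gᵀ k)) '' I)) := by
  have hco : (Matrix.fromRows (colSub F I) (colSub G I))ᵀ
      = (fun k => Sum.elim (Fᵀ k) (Gᵀ k)) ∘ Subtype.val := by
    funext i r
    cases r <;> rfl
  have hset : Set.range (Matrix.fromRows (colSub F I) (colSub G I))ᵀ
      = (fun k => Sum.elim (Fᵀ k) (Gᵀ k)) '' ↑I := by
    rw [hco, Set.range_comp, Subtype.range_coe]
  rw [Matrix.rank_eq_finrank_span_cols, Matrix.col, hset]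

/-- An inclusion-wise minimal set satisfying the rank-increment condition has
size exactly N + rank(F_{I*}), i.e. [F_{I*};G_{I*}] has full column rank. -/
theorem card_eq_of_minimal_rank_increment
    {𝔽 : Type*} [Field 𝔽] [Fintype 𝔽] {M N K : ℕ}
    (F : Matrix (Fin M) (Fin K) 𝔽) (G : Matrix (Fin N) (Fin K) 𝔽)
    (I : Finset (Fin K))
    (hI : (Matrix.fromRows (colSub F I) (colSub G I)).rank = (colSub F I).rank + N)
    (hmin : ∀ J : Finset (Fin K), J ⊂ I →
      (Matrix.fromRows (colSub F J) (colSub G J)).rank ≠ (colSub F J).rank + N) :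
    I.card = N + (colSub F I).rank := by
  set v : Fin K → (Fin M ⊕ Fin N → 𝔽) := fun k => Sum.elim (Fᵀ k) (Gᵀ k) with hv
  by_cases hLI : LinearIndependent 𝔽 (fun i : {x // x ∈ I} => v i.val)
  · have hcard : Module.finrank 𝔽 (Submodule.span 𝔽 (Set.range
        (fun i : {x // x ∈ I} => v i.val))) = Fintype.card {x // x ∈ I} :=
      finrank_span_eq_card hLI
    have hrange : Set.range (fun i : {x // x ∈ I} => v i.val) = v '' I := by
      rw [show (fun i : {x // x ∈ I} => v i.val) = v ∘ Subtype.val from rfl,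
        Set.range_comp, Subtype.range_coe]
    rw [hrange] at hcard
    rw [← Fintype.card_coe, ← hcard, ← rank_fromRows_colSub, hI, add_comm]
  · obtain ⟨g, hsum, j, hgj⟩ := Fintype.not_linearIndependent_iff.mp hLI
    have hjI := j.2
    have hss : I.erase j.val ⊂ I := Finset.erase_ssubset hjI
    -- dependency among F-columns via projection
    have hFsum : ∑ i : {x // x ∈ I}, g i • Fᵀ i.val = 0 := by
      have := congrArg (LinearMap.funLeft 𝔽 𝔽 (Sum.inl : Fin M → Fin M ⊕ Fin N)) hsum
      have e : ∀ k, LinearMap.funLeft 𝔽 𝔽 (Sum.inl : Fin M → Fin M ⊕ Fin N) (v k) = Fᵀ k :=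
        fun k => rfl
      simpa [map_sum, LinearMap.map_smul, e] using this
    have hspanV := span_image_erase v I g hsum j hgj
    have hspanF := span_image_erase Fᵀ I g hFsum j hgj
    have h1 : (Matrix.fromRows (colSub F (I.erase j.val)) (colSub G (I.erase j.val))).rank
        = (Matrix.fromRows (colSub F I) (colSub G I)).rank := by
      rw [rank_fromRows_colSub, rank_fromRows_colSub, ← hv, hspanV]
    have h2 : (colSub F (I.erase j.val)).rank = (colSub F I).rank := by
      rw [rank_colSub, rank_colSub, hspanF]
    exact absurd (by rw [h1, h2, hI]) (hmin _ hss)
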